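/- Let q > 1 be a real number. Let X and Y be positive semidefinite matrices (of finite sizes d₁ and d₂ respectively) with ‖X‖_q = ‖Y‖_q = 1. Then there exists a positive semidefinite matrix Z of size d₁·d₂ with ‖Z‖_q = 1 satisfying the matrix inequality Z ≥ X ⊗ 𝟙 + 𝟙 ⊗ Y − 𝟙 (i.e., Z − (X ⊗ 𝟙 + 𝟙 ⊗ Y − 𝟙) is positive semidefinite), where X ⊗ 𝟙 and 𝟙 ⊗ Y denote Kronecker products with identity matrices of the appropriate sizes and 𝟙 on its own denotes the identity matrix of size d₁·d₂. -/

import Mathlib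

open Matrix ComplexOrder Kronecker Polynomial Finset

/-- `Tr[A^q]` for a Hermitian matrix `A`, where `A^q` is the matrix power obtained by raising
each eigenvalue of `A` to the (real) power `q`; defined as `0` if `A` is not Hermitian. -/
noncomputable def traceRpow {d : Type*} [Fintype d] [DecidableEq d]
    (q : ℝ) (A : Matrix d d ℂ) : ℝ :=
  if hA : A.IsHermitian then ∑ i, hA.eigenvalues i ^ q else 0

/-- The Schatten `q`-norm `‖A‖_q = (Tr[A^q])^{1/q}` of a positive semidefinite matrix `A`. -/
noncomputable def schattenNorm {d : Type*} [Fintype d] [DecidableEq d]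
    (q : ℝ) (A : Matrix d d ℂ) : ℝ :=
  traceRpow q A ^ (1 / q)

variable {n m : Type*} [Fintype n] [Fintype m] [DecidableEq n] [DecidableEq m]

lemma conjT_kron {l p r s : Type*} (A : Matrix l p ℂ) (B : Matrix r s ℂ) :
    (A ⊗ₖ B)ᴴ = Aᴴ ⊗ₖ Bᴴ := by
  ext ⟨i, j⟩ ⟨k, t⟩
  simp [Matrix.conjTranspose_apply, Matrix.kroneckerMap_apply, mul_comm]

lemma star_kron (A : Matrix n n ℂ) (B : Matrix m m ℂ) :
    star (A ⊗ₖ B) = star A ⊗ₖ star B := by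
  rw [Matrix.star_eq_conjTranspose, Matrix.star_eq_conjTranspose,
    Matrix.star_eq_conjTranspose, conjT_kron]

lemma kron_psd {A : Matrix n n ℂ} {B : Matrix m m ℂ}
    (hA : A.PosSemidef) (hB : B.PosSemidef) : (A ⊗ₖ B).PosSemidef := by
  obtain ⟨A', rfl⟩ : ∃ A' : Matrix n n ℂ, A = A'ᴴ * A' := by
    open scoped MatrixOrder in exact CStarAlgebra.nonneg_iff_eq_star_mul_self.mp hA.nonneg
  obtain ⟨B', rfl⟩ : ∃ B' : Matrix m m ℂ, B = B'ᴴ * B' := by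
    open scoped MatrixOrder in exact CStarAlgebra.nonneg_iff_eq_star_mul_self.mp hB.nonneg
  rw [Matrix.mul_kronecker_mul, ← conjT_kron]
  exact Matrix.posSemidef_conjTranspose_mul_self _

lemma sub_kron (A B : Matrix n n ℂ) (C : Matrix m m ℂ) :
    (A - B) ⊗ₖ C = A ⊗ₖ C - B ⊗ₖ C := by
  ext ⟨i, j⟩ ⟨k, t⟩
  simp [Matrix.kroneckerMap_apply, sub_mul]

lemma kron_sub (A : Matrix n n ℂ) (B C : Matrix m m ℂ) :
    A ⊗ₖ (B - C) = A ⊗ₖ B - A ⊗ₖ C := by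
  ext ⟨i, j⟩ ⟨k, t⟩
  simp [Matrix.kroneckerMap_apply, mul_sub]

lemma charpoly_diag (v : n → ℂ) :
    (Matrix.diagonal v).charpoly = ∏ i, (X - C (v i)) := by
  have h : charmatrix (Matrix.diagonal v) = Matrix.diagonal fun i => (X : ℂ[X]) - C (v i) := by
    ext i j
    by_cases h : i = j
    · subst h; simp [charmatrix_apply_eq]
    · simp [charmatrix_apply_ne _ _ _ h, Matrix.diagonal_apply_ne _ h]
  rw [Matrix.charpoly, h, Matrix.det_diagonal]

lemma charpoly_conj' (U A : Matrix n n ℂ) (hU : U * star U = 1) :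
    (U * A * star U).charpoly = A.charpoly := by
  have hch : ∀ M : Matrix n n ℂ, charmatrix M
      = (X : ℂ[X]) • (1 : Matrix n n ℂ[X]) - M.map C := by
    intro M
    ext i j
    by_cases h : i = j
    · subst h; simp [charmatrix_apply_eq, Matrix.one_apply, Matrix.map_apply]
    · simp [charmatrix_apply_ne _ _ _ h, Matrix.one_apply_ne h, Matrix.map_apply]
  have h1 : (U.map C) * ((star U).map C) = 1 := by
    rw [← Matrix.map_mul, hU, Matrix.map_one C (map_zero C) (map_one C)]
  have key : (X : ℂ[X]) • (1 : Matrix n n ℂ[X]) - (U * A * star U).map C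
      = U.map C * ((X : ℂ[X]) • 1 - A.map C) * (star U).map C := by
    rw [Matrix.map_mul, Matrix.map_mul, Matrix.mul_sub, Matrix.sub_mul]
    congr 1
    rw [mul_smul_comm, mul_one, smul_mul_assoc, h1]
  rw [Matrix.charpoly, Matrix.charpoly, hch, hch, key, det_mul, det_mul]
  calc (U.map C).det * ((X : ℂ[X]) • (1 : Matrix n n ℂ[X]) - A.map C).det * ((star U).map C).det
      = ((X : ℂ[X]) • (1 : Matrix n n ℂ[X]) - A.map C).det
        * ((U.map C).det * ((star U).map C).det) := by ring
    _ = _ := by rw [← det_mul, h1, det_one, mul_one]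

/-- The multiset of eigenvalues of a Hermitian matrix is determined by any unitary
diagonalization. -/
lemma sum_eig_rpow {A : Matrix n n ℂ} (hA : A.IsHermitian)
    (U : Matrix n n ℂ) (hU : U * star U = 1) (d : n → ℝ)
    (h : A = U * Matrix.diagonal (fun i => (d i : ℂ)) * star U) (q : ℝ) :
    ∑ i, hA.eigenvalues i ^ q = ∑ i, d i ^ q := by
  have hUe : (hA.eigenvectorUnitary : Matrix n n ℂ) * star (hA.eigenvectorUnitary : Matrix n n ℂ) = 1 :=
    Matrix.mem_unitaryGroup_iff.mp hA.eigenvectorUnitary.2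
  have e1 : A.charpoly = ∏ i, (X - C ((d i : ℂ))) := by
    rw [h, charpoly_conj' _ _ hU, charpoly_diag]
  have e2 : A.charpoly = ∏ i, (X - C ((hA.eigenvalues i : ℂ))) := by
    conv_lhs => rw [show A = (hA.eigenvectorUnitary : Matrix n n ℂ)
      * Matrix.diagonal (RCLike.ofReal ∘ hA.eigenvalues)
      * star (hA.eigenvectorUnitary : Matrix n n ℂ) from hA.spectral_theorem]
    rw [charpoly_conj' _ _ hUe, charpoly_diag]
    rfl
  have e3 : Multiset.map (fun i => ((d i : ℂ))) Finset.univ.val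
      = Multiset.map (fun i => ((hA.eigenvalues i : ℂ))) Finset.univ.val := by
    have r1 := Polynomial.roots_multiset_prod_X_sub_C
      (Finset.univ.val.map (fun i => (d i : ℂ)))
    have r2 := Polynomial.roots_multiset_prod_X_sub_C
      (Finset.univ.val.map (fun i => (hA.eigenvalues i : ℂ)))
    rw [Multiset.map_map] at r1 r2
    rw [← r1, ← r2]
    congr 1
    rw [← Finset.prod_eq_multiset_prod, ← Finset.prod_eq_multiset_prod]
    simp only [Function.comp_def]
    rw [← e1, ← e2]
  have e4 : Multiset.map d Finset.univ.val = Multiset.map hA.eigenvalues Finset.univ.val := by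
    apply Multiset.map_injective Complex.ofReal_injective
    simpa [Multiset.map_map, Function.comp_def] using e3
  have hs : ∀ v : n → ℝ, ∑ i, v i ^ q = ((Finset.univ.val.map v).map (· ^ q)).sum := by
    intro v
    rw [Multiset.map_map]
    rfl
  rw [hs, hs, e4]


lemma traceRpow_posSemidef {d : Type*} [Fintype d] [DecidableEq d] {A : Matrix d d ℂ}
    (hA : A.PosSemidef) (q : ℝ) : traceRpow q A = ∑ i, hA.1.eigenvalues i ^ q := by
  rw [traceRpow, dif_pos hA.1]

lemma traceRpow_nonneg {d : Type*} [Fintype d] [DecidableEq d] {A : Matrix d d ℂ}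
    (hA : A.PosSemidef) (q : ℝ) : 0 ≤ traceRpow q A := by
  rw [traceRpow_posSemidef hA]
  exact Finset.sum_nonneg fun i _ => Real.rpow_nonneg (hA.eigenvalues_nonneg i) q

lemma traceRpow_eq_one {d : Type*} [Fintype d] [DecidableEq d] {A : Matrix d d ℂ}
    (hA : A.PosSemidef) {q : ℝ} (hq : 1 < q) (h : schattenNorm q A = 1) :
    traceRpow q A = 1 := by
  have hq0 : q ≠ 0 := by linarith
  have h2 : (traceRpow q A ^ (1 / q)) ^ q = 1 := by
    rw [schattenNorm] at h; rw [h, Real.one_rpow]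
  rwa [← Real.rpow_mul (traceRpow_nonneg hA q), one_div_mul_cancel hq0,
    Real.rpow_one] at h2

lemma eigenvalues_le_one {d : Type*} [Fintype d] [DecidableEq d] {A : Matrix d d ℂ}
    (hA : A.PosSemidef) {q : ℝ} (hq : 1 < q) (h : traceRpow q A = 1) (i : d) :
    hA.1.eigenvalues i ≤ 1 := by
  rw [traceRpow_posSemidef hA] at h
  have hle : hA.1.eigenvalues i ^ q ≤ 1 := by
    rw [← h]
    exact Finset.single_le_sum (f := fun j => hA.1.eigenvalues j ^ q)
      (fun j _ => Real.rpow_nonneg (hA.eigenvalues_nonneg j) q) (Finset.mem_univ i)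
  by_contra hgt
  push_neg at hgt
  have : (1 : ℝ) < hA.1.eigenvalues i ^ q :=
    (Real.one_lt_rpow_iff_of_pos (by linarith)).mpr (Or.inl ⟨hgt, by linarith⟩)
  linarith


/-- For `q > 1` and positive semidefinite matrices `X`, `Y` with `‖X‖_q = ‖Y‖_q = 1`, there
exists a positive semidefinite `Z` with `‖Z‖_q = 1` and `Z ≥ X ⊗ 𝟙 + 𝟙 ⊗ Y − 𝟙`
(i.e. the difference is positive semidefinite). -/
theorem exists_Z_schattenNorm_one_ge {d₁ d₂ : ℕ} (q : ℝ) (hq : 1 < q)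
    (X : Matrix (Fin d₁) (Fin d₁) ℂ) (Y : Matrix (Fin d₂) (Fin d₂) ℂ)
    (hX : X.PosSemidef) (hY : Y.PosSemidef)
    (hXnorm : schattenNorm q X = 1) (hYnorm : schattenNorm q Y = 1) :
    ∃ Z : Matrix (Fin d₁ × Fin d₂) (Fin d₁ × Fin d₂) ℂ,
      Z.PosSemidef ∧ schattenNorm q Z = 1 ∧
        (Z - (X ⊗ₖ (1 : Matrix (Fin d₂) (Fin d₂) ℂ)
          + (1 : Matrix (Fin d₁) (Fin d₁) ℂ) ⊗ₖ Y
          - (1 : Matrix (Fin d₁ × Fin d₂) (Fin d₁ × Fin d₂) ℂ))).PosSemidef := by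
  have hq0 : q ≠ 0 := by linarith
  set x := hX.1.eigenvalues with hxdef
  set y := hY.1.eigenvalues with hydef
  set U₁ := (hX.1.eigenvectorUnitary : Matrix (Fin d₁) (Fin d₁) ℂ) with hU₁def
  set U₂ := (hY.1.eigenvectorUnitary : Matrix (Fin d₂) (Fin d₂) ℂ) with hU₂def
  have hU₁ : U₁ * star U₁ = 1 := Matrix.mem_unitaryGroup_iff.mp hX.1.eigenvectorUnitary.2
  have hU₂ : U₂ * star U₂ = 1 := Matrix.mem_unitaryGroup_iff.mp hY.1.eigenvectorUnitary.2
  have hXspec : X = U₁ * Matrix.diagonal (fun i => (x i : ℂ)) * star U₁ := hX.1.spectral_theorem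
  have hYspec : Y = U₂ * Matrix.diagonal (fun i => (y i : ℂ)) * star U₂ := hY.1.spectral_theorem
  have htX : traceRpow q X = 1 := traceRpow_eq_one hX hq hXnorm
  have htY : traceRpow q Y = 1 := traceRpow_eq_one hY hq hYnorm
  -- Z := X ⊗ Y
  refine ⟨X ⊗ₖ Y, kron_psd hX hY, ?_, ?_⟩
  · -- Schatten norm of the Kronecker product
    have hZpsd : (X ⊗ₖ Y).PosSemidef := kron_psd hX hY
    have hUk : (U₁ ⊗ₖ U₂) * star (U₁ ⊗ₖ U₂) = 1 := by
      rw [star_kron, ← Matrix.mul_kronecker_mul, hU₁, hU₂, Matrix.one_kronecker_one]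
    have hdecomp : X ⊗ₖ Y = (U₁ ⊗ₖ U₂)
        * Matrix.diagonal (fun p : Fin d₁ × Fin d₂ => ((x p.1 * y p.2 : ℝ) : ℂ))
        * star (U₁ ⊗ₖ U₂) := by
      rw [star_kron]
      conv_lhs => rw [hXspec, hYspec]
      rw [Matrix.mul_kronecker_mul, Matrix.mul_kronecker_mul,
        Matrix.diagonal_kronecker_diagonal]
      congr 1
      congr 1
      funext p
      push_cast
      ring
    have hsum : traceRpow q (X ⊗ₖ Y) = ∑ p : Fin d₁ × Fin d₂, (x p.1 * y p.2) ^ q := by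
      rw [traceRpow, dif_pos hZpsd.1]
      exact sum_eig_rpow hZpsd.1 (U₁ ⊗ₖ U₂) hUk _ hdecomp q
    have hsum2 : traceRpow q (X ⊗ₖ Y) = 1 := by
      rw [hsum]
      have : ∀ (i : Fin d₁) (j : Fin d₂), (x i * y j) ^ q = x i ^ q * y j ^ q :=
        fun i j => Real.mul_rpow (hX.eigenvalues_nonneg i) (hY.eigenvalues_nonneg j)
      rw [Fintype.sum_prod_type]
      simp_rw [this]
      rw [← Finset.sum_mul_sum]
      rw [traceRpow_posSemidef hX] at htX
      rw [traceRpow_posSemidef hY] at htY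
      rw [htX, htY, one_mul]
    rw [schattenNorm, hsum2, Real.one_rpow]
  · -- the PSD inequality
    have h1X : (1 - X).PosSemidef := by
      have heq : (1 : Matrix (Fin d₁) (Fin d₁) ℂ) - X
          = U₁ * Matrix.diagonal (fun i => ((1 - x i : ℝ) : ℂ)) * star U₁ := by
        conv_lhs => rw [← hU₁, hXspec]
        rw [← Matrix.sub_mul]
        congr 1
        have hdg : Matrix.diagonal (fun i => ((1 - x i : ℝ) : ℂ))
            = 1 - Matrix.diagonal (fun i => ((x i : ℝ) : ℂ)) := by
          ext i j
          rcases eq_or_ne i j with rfl | h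
          · simp only [Matrix.diagonal_apply_eq, Matrix.sub_apply, Matrix.one_apply_eq]
            push_cast
            ring
          · simp [Matrix.diagonal_apply_ne _ h, Matrix.sub_apply, Matrix.one_apply_ne h]
        rw [hdg, Matrix.mul_sub, mul_one]
      rw [heq, Matrix.star_eq_conjTranspose]
      refine Matrix.PosSemidef.mul_mul_conjTranspose_same ?_ U₁
      refine Matrix.PosSemidef.diagonal fun i => ?_
      show (0 : ℂ) ≤ ((1 - x i : ℝ) : ℂ)
      rw [Complex.zero_le_real]
      have := eigenvalues_le_one hX hq htX i
      linarith
    have h1Y : (1 - Y).PosSemidef := by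
      have heq : (1 : Matrix (Fin d₂) (Fin d₂) ℂ) - Y
          = U₂ * Matrix.diagonal (fun i => ((1 - y i : ℝ) : ℂ)) * star U₂ := by
        conv_lhs => rw [← hU₂, hYspec]
        rw [← Matrix.sub_mul]
        congr 1
        have hdg : Matrix.diagonal (fun i => ((1 - y i : ℝ) : ℂ))
            = 1 - Matrix.diagonal (fun i => ((y i : ℝ) : ℂ)) := by
          ext i j
          rcases eq_or_ne i j with rfl | h
          · simp only [Matrix.diagonal_apply_eq, Matrix.sub_apply, Matrix.one_apply_eq]
            push_cast
            ring
          · simp [Matrix.diagonal_apply_ne _ h, Matrix.sub_apply, Matrix.one_apply_ne h]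
        rw [hdg, Matrix.mul_sub, mul_one]
      rw [heq, Matrix.star_eq_conjTranspose]
      refine Matrix.PosSemidef.mul_mul_conjTranspose_same ?_ U₂
      refine Matrix.PosSemidef.diagonal fun i => ?_
      show (0 : ℂ) ≤ ((1 - y i : ℝ) : ℂ)
      rw [Complex.zero_le_real]
      have := eigenvalues_le_one hY hq htY i
      linarith
    have key : X ⊗ₖ Y - (X ⊗ₖ (1 : Matrix (Fin d₂) (Fin d₂) ℂ)
          + (1 : Matrix (Fin d₁) (Fin d₁) ℂ) ⊗ₖ Y
          - (1 : Matrix (Fin d₁ × Fin d₂) (Fin d₁ × Fin d₂) ℂ))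
        = (1 - X) ⊗ₖ (1 - Y) := by
      rw [sub_kron, kron_sub, kron_sub, Matrix.one_kronecker_one]
      abel
    rw [key]
    exact kron_psd h1X h1Y
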